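/- Let R be a Noetherian ring and I a nonzero prime ideal generated by a regular sequence. Then for every positive integer e, the ideal I^e is Ratliff–Rush, i.e., I^e = ∪_{n≥0} (I^{e(n+1)} : I^{en}). -/

import Mathlib

/-!
STATEMENT 3: If `I` is a nonzero prime ideal of a Noetherian ring `R` generated by a
regular sequence, then `I^e` is Ratliff–Rush for every `e ≥ 1`:
`I^e = ⋃_{n≥0} (I^{e(n+1)} : I^{en})`.
-/

namespace RRaux
open MvPolynomial

variable {R : Type*} [CommRing R]

open MvPolynomial

variable {R : Type*} [CommRing R]

lemma ofList_eq_span (as : List R) : Ideal.ofList as = Ideal.span (Set.range as.get) := by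
  have h : {r : R | r ∈ as} = Set.range as.get := by
    ext r
    simp [List.mem_iff_get, eq_comm]
  show Ideal.span _ = _
  rw [h]

lemma prod_pow_mem {ι : Type*} (I : Ideal R) {a : ι → R} (ha : ∀ i, a i ∈ I)
    (s : Finset ι) (m : ι → ℕ) : (∏ i ∈ s, a i ^ m i) ∈ I ^ (∑ i ∈ s, m i) := by
  classical
  induction s using Finset.induction with
  | empty => simp
  | @insert j s hj ih =>
    rw [Finset.prod_insert hj, Finset.sum_insert hj, pow_add]
    exact Ideal.mul_mem_mul (Ideal.pow_mem_pow (ha _) _) ih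

lemma aeval_mem_mul {ι : Type*} (I J : Ideal R) {a : ι → R} (ha : ∀ i, a i ∈ I)
    {F : MvPolynomial ι R} {d : ℕ} (hF : F.IsHomogeneous d) (hc : ∀ m, F.coeff m ∈ J) :
    aeval a F ∈ J * I ^ d := by
  rw [F.as_sum, map_sum]
  refine Ideal.sum_mem _ fun m hm => ?_
  rw [aeval_monomial]
  have hdeg : (∑ i ∈ m.support, m i) = d := by
    have := hF (mem_support_iff.mp hm)
    rw [← this]
    exact (show m.degree = (Finsupp.weight 1) m by rw [Finsupp.degree_eq_weight_one] <;> rfl)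
  have hprod : (m.prod fun i k => a i ^ k) ∈ I ^ d := by
    rw [Finsupp.prod, ← hdeg]
    exact prod_pow_mem I ha _ _
  simpa using Ideal.mul_mem_mul (hc m) hprod

lemma aeval_mem {ι : Type*} (I : Ideal R) {a : ι → R} (ha : ∀ i, a i ∈ I)
    {F : MvPolynomial ι R} {d : ℕ} (hF : F.IsHomogeneous d) :
    aeval a F ∈ I ^ d := by
  simpa using aeval_mem_mul I ⊤ ha hF (fun m => trivial)


open MvPolynomial

variable {R : Type*} [CommRing R]

lemma exists_repr {ι : Type*} (a : ι → R) {d : ℕ} {x : R}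
    (hx : x ∈ (Ideal.span (Set.range a)) ^ d) :
    ∃ F : MvPolynomial ι R, F.IsHomogeneous d ∧ aeval a F = x := by
  induction d generalizing x with
  | zero => exact ⟨C x, isHomogeneous_C _ _, by simp⟩
  | succ d ih =>
    rw [pow_succ] at hx
    refine Submodule.mul_induction_on hx ?_ ?_
    · intro y hy r hr
      obtain ⟨F, hF, hFe⟩ := ih hy
      have hr' : ∃ L : MvPolynomial ι R, L.IsHomogeneous 1 ∧ aeval a L = r := by
        refine Submodule.span_induction ?_ ?_ ?_ ?_ hr
        · rintro _ ⟨i, rfl⟩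
          exact ⟨X i, isHomogeneous_X _ _, by simp⟩
        · exact ⟨0, isHomogeneous_zero _ _ _, by simp⟩
        · rintro x y - - ⟨L, hL, hLe⟩ ⟨L', hL', hLe'⟩
          exact ⟨L + L', hL.add hL', by rw [map_add, hLe, hLe']⟩
        · rintro c x - ⟨L, hL, hLe⟩
          exact ⟨C c * L, (isHomogeneous_C _ c).mul hL, by
            rw [map_mul, aeval_C, hLe]; simp [smul_eq_mul]⟩
      obtain ⟨L, hL, hLe⟩ := hr'
      exact ⟨F * L, hF.mul hL, by rw [map_mul, hFe, hLe]⟩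
    · rintro x y ⟨F, hF, hFe⟩ ⟨G, hG, hGe⟩
      exact ⟨F + G, hF.add hG, by rw [map_add, hFe, hGe]⟩

lemma degree_eq_sum_univ {ι : Type*} [Fintype ι] (m : ι →₀ ℕ) :
    m.degree = ∑ i, m i :=
  Finset.sum_subset (Finset.subset_univ _) (fun i _ h => Finsupp.notMem_support_iff.mp h)

lemma degree_cons {n : ℕ} (i0 : ℕ) (m : Fin n →₀ ℕ) :
    (m.cons i0).degree = i0 + m.degree := by
  rw [degree_eq_sum_univ, degree_eq_sum_univ, Fin.sum_univ_succ]
  simp [Finsupp.cons_zero, Finsupp.cons_succ]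


open MvPolynomial

variable {R : Type*} [CommRing R]

lemma weight_one_eq_degree {ι : Type*} (m : ι →₀ ℕ) :
    (Finsupp.weight 1) m = m.degree := by
  rw [Finsupp.degree_eq_weight_one] <;> rfl

lemma finSuccEquiv_rename_succ {n : ℕ} (G : MvPolynomial (Fin n) R) :
    finSuccEquiv R n (rename Fin.succ G) = Polynomial.C G := by
  induction G using MvPolynomial.induction_on with
  | C r =>
    rw [rename_C]
    simp [finSuccEquiv_apply]
  | add p q hp hq => rw [map_add, map_add, hp, hq, map_add]
  | mul_X p i hp => rw [map_mul, map_mul, hp, rename_X, finSuccEquiv_X_succ, map_mul]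

lemma isHomog_of_X_mul {n : ℕ} {H : MvPolynomial (Fin (n + 1)) R} {k : ℕ}
    (h : (X 0 * H).IsHomogeneous (k + 1)) : H.IsHomogeneous k := by
  intro m hm
  have h2 : coeff (Finsupp.single 0 1 + m) (X (0 : Fin (n+1)) * H) ≠ 0 := by
    rwa [coeff_X_mul]
  have h3 := h h2
  rw [weight_one_eq_degree] at h3 ⊢
  have h4 : (Finsupp.single (0 : Fin (n+1)) 1 + m).degree
      = (Finsupp.single (0 : Fin (n+1)) 1).degree + m.degree := by
    rw [degree_eq_sum_univ, degree_eq_sum_univ, degree_eq_sum_univ, ← Finset.sum_add_distrib]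
    simp
  rw [h4] at h3
  have h5 : (Finsupp.single (0 : Fin (n+1)) 1).degree = 1 := by
    rw [degree_eq_sum_univ]; simp
  omega

lemma decomp {n : ℕ} {d : ℕ} (F : MvPolynomial (Fin (n + 1)) R)
    (hF : F.IsHomogeneous (d + 1)) :
    ∃ (G : MvPolynomial (Fin n) R) (H : MvPolynomial (Fin (n + 1)) R),
      F = rename Fin.succ G + X 0 * H ∧ G.IsHomogeneous (d + 1) ∧ H.IsHomogeneous d := by
  set p := finSuccEquiv R n F with hp
  set G := p.coeff 0 with hG
  set H := (finSuccEquiv R n).symm (p.divX) with hH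
  have key : F = rename Fin.succ G + X 0 * H := by
    apply (finSuccEquiv R n).injective
    rw [map_add, map_mul, finSuccEquiv_rename_succ, finSuccEquiv_X_zero]
    have hHs : finSuccEquiv R n H = p.divX := by
      rw [hH]; exact (finSuccEquiv R n).apply_symm_apply _
    rw [hHs, ← hp]
    exact (Polynomial.X_mul_divX_add p).symm.trans (by ring)
  have hGhom : G.IsHomogeneous (d + 1) := by
    intro m hm
    have : coeff (m.cons 0) F ≠ 0 := by
      rwa [← finSuccEquiv_coeff_coeff]
    have h3 := hF this
    rw [weight_one_eq_degree] at h3 ⊢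
    rw [degree_eq_sum_univ, Fin.sum_univ_succ] at h3
    simp only [Finsupp.cons_zero, Finsupp.cons_succ, zero_add] at h3
    rw [degree_eq_sum_univ]
    exact h3
  have hXH : (X (0 : Fin (n+1)) * H).IsHomogeneous (d + 1) := by
    have h1 : (rename Fin.succ G).IsHomogeneous (d + 1) := hGhom.rename_isHomogeneous
    have : X (0 : Fin (n+1)) * H = F - rename Fin.succ G := by rw [key]; ring
    rw [this]
    exact hF.sub h1
  exact ⟨G, H, key, hGhom, isHomog_of_X_mul hXH⟩


/-- Quasi-regularity property for the sequence `as`. -/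
def QRProp (as : List R) : Prop :=
  ∀ (d : ℕ) (F : MvPolynomial (Fin as.length) R), F.IsHomogeneous d →
    aeval as.get F ∈ (Ideal.ofList as) ^ (d + 1) →
      F ∈ Ideal.map (C : R →+* MvPolynomial (Fin as.length) R) (Ideal.ofList as)

lemma lemB {as' : List R} {b : R}
    (hb : ∀ z, b * z ∈ Ideal.ofList as' → z ∈ Ideal.ofList as')
    (hqr : QRProp as') :
    ∀ (k : ℕ) (z : R), b * z ∈ (Ideal.ofList as') ^ k → z ∈ (Ideal.ofList as') ^ k := by
  intro k
  induction k with
  | zero => intro z _; simp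
  | succ k ih =>
    intro z hz
    have hzk : z ∈ (Ideal.ofList as') ^ k :=
      ih z (Ideal.pow_le_pow_right (Nat.le_succ k) hz)
    rw [ofList_eq_span] at hzk
    obtain ⟨F, hF, hFe⟩ := exists_repr as'.get hzk
    have hCbF : (C b * F).IsHomogeneous k := by
      simpa using (isHomogeneous_C _ b).mul hF
    have hmem : aeval as'.get (C b * F) ∈ (Ideal.ofList as') ^ (k + 1) := by
      rw [map_mul, aeval_C, hFe]
      simpa using hz
    have hmap := hqr k (C b * F) hCbF hmem
    have hcoeff : ∀ m, F.coeff m ∈ Ideal.ofList as' := by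
      intro m
      have := MvPolynomial.mem_map_C_iff.mp hmap m
      rw [coeff_C_mul] at this
      exact hb _ this
    have hget : ∀ i, as'.get i ∈ Ideal.ofList as' :=
      fun i => Ideal.subset_span (as'.get_mem _)
    have := aeval_mem_mul (Ideal.ofList as') (Ideal.ofList as') hget hF hcoeff
    rw [hFe, ← pow_succ'] at this
    exact this

lemma lemPow (b : R) (as' : List R) :
    ∀ k : ℕ, (Ideal.span {b} ⊔ Ideal.ofList as') ^ (k + 1) ≤
      (Ideal.ofList as') ^ (k + 1) ⊔ Ideal.span {b} * (Ideal.span {b} ⊔ Ideal.ofList as') ^ k := by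
  set B := Ideal.span {b}
  set I' := Ideal.ofList as'
  intro k
  induction k with
  | zero => simp [sup_comm]
  | succ k ih =>
    calc (B ⊔ I') ^ (k + 2) = (B ⊔ I') * (B ⊔ I') ^ (k + 1) := by rw [pow_succ']
    _ ≤ (B ⊔ I') * (I' ^ (k + 1) ⊔ B * (B ⊔ I') ^ k) := Ideal.mul_mono_right ih
    _ = (B ⊔ I') * I' ^ (k + 1) ⊔ B * (B ⊔ I') ^ (k + 1) := by
        rw [Ideal.mul_sup]
        congr 1
        rw [← mul_assoc, mul_comm (B ⊔ I') B, mul_assoc, ← pow_succ']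
    _ ≤ (I' ^ (k + 2) ⊔ B * (B ⊔ I') ^ (k + 1)) := by
        apply sup_le _ le_sup_right
        rw [Ideal.sup_mul]
        apply sup_le
        · exact le_trans (Ideal.mul_mono_right (Ideal.pow_right_mono le_sup_right _))
            le_sup_right
        · rw [← pow_succ']
          exact le_sup_left

lemma lemB' {as' : List R} {b : R}
    (hb : ∀ z, b * z ∈ Ideal.ofList as' → z ∈ Ideal.ofList as')
    (hqr : QRProp as') :
    ∀ (k : ℕ) (z : R), b * z ∈ (Ideal.ofList (b :: as')) ^ (k + 1) →
      z ∈ (Ideal.ofList (b :: as')) ^ k := by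
  intro k z hz
  rw [Ideal.ofList_cons] at hz ⊢
  have h1 := lemPow b as' k hz
  obtain ⟨v, hv, w, hw, hvw⟩ := Submodule.mem_sup.mp h1
  obtain ⟨s, hs, hws⟩ := Ideal.mem_span_singleton_mul.mp hw
  have hzs : b * (z - s) ∈ (Ideal.ofList as') ^ (k + 1) := by
    have : b * (z - s) = v := by rw [mul_sub, hws, ← hvw]; ring
    rwa [this]
  have h2 : z - s ∈ (Ideal.ofList as') ^ (k + 1) := lemB hb hqr (k + 1) _ hzs
  have h3 : z - s ∈ (Ideal.span {b} ⊔ Ideal.ofList as') ^ k :=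
    Ideal.pow_le_pow_right (Nat.le_succ k) (Ideal.pow_right_mono le_sup_right _ h2)
  simpa using add_mem h3 hs


/-- Each element is a nonzerodivisor modulo the ideal generated by the later ones. -/
def GoodSeq : List R → Prop
  | [] => True
  | b :: as' => GoodSeq as' ∧ ∀ z, b * z ∈ Ideal.ofList as' → z ∈ Ideal.ofList as'

lemma homog_zero_eq_C {ι : Type*} {F : MvPolynomial ι R} (hF : F.IsHomogeneous 0) :
    F = C (F.coeff 0) := by
  classical
  ext m
  rw [coeff_C]
  by_cases hm : m = 0
  · simp [hm]
  · rw [if_neg (Ne.symm hm)]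
    by_contra h
    have := hF h
    rw [weight_one_eq_degree] at this
    exact hm ((Finsupp.degree_eq_zero_iff m).mp this)

theorem qr_core : ∀ (as : List R), GoodSeq as → QRProp as := by
  intro as
  induction as with
  | nil =>
    intro _ d F hF hFe
    obtain ⟨r, rfl⟩ := (C_surjective (Fin 0)) F
    have : aeval ([] : List R).get (C r : MvPolynomial (Fin 0) R) = r := by simp
    rw [this] at hFe
    simp only [Ideal.ofList_nil] at hFe ⊢
    have hr : r = 0 := by
      have : (⊥ : Ideal R) ^ (d + 1) = ⊥ := by
        rw [← Ideal.zero_eq_bot, zero_pow (Nat.succ_ne_zero d)]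
      rw [this] at hFe
      simpa using hFe
    rw [hr]
    simp
  | cons b as' ih =>
    rintro ⟨hgood', hb⟩
    have hqr' : QRProp as' := ih hgood'
    show ∀ (d : ℕ) (F : MvPolynomial (Fin (as'.length + 1)) R), F.IsHomogeneous d →
      aeval ((b :: as').get : Fin (as'.length + 1) → R) F ∈ (Ideal.ofList (b :: as')) ^ (d + 1) →
        F ∈ Ideal.map (C : R →+* MvPolynomial (Fin (as'.length + 1)) R) (Ideal.ofList (b :: as'))
    intro d
    induction d with
    | zero =>
      intro F hF hFe
      rw [homog_zero_eq_C hF] at hFe ⊢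
      have h0 : aeval ((b :: as').get : Fin (as'.length + 1) → R)
          (C (F.coeff 0) : MvPolynomial (Fin (as'.length + 1)) R) = F.coeff 0 := by simp
      rw [h0, pow_one] at hFe
      exact Ideal.mem_map_of_mem _ hFe
    | succ d ihd =>
      intro F hF hFe
      obtain ⟨a, ha⟩ : ∃ a : Fin (as'.length + 1) → R, a = (b :: as').get := ⟨_, rfl⟩
      rw [← ha] at hFe
      replace ihd : ∀ (F : MvPolynomial (Fin (as'.length + 1)) R), F.IsHomogeneous d →
          aeval a F ∈ (Ideal.ofList (b :: as')) ^ (d + 1) →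
          F ∈ Ideal.map (C : R →+* MvPolynomial (Fin (as'.length + 1)) R)
            (Ideal.ofList (b :: as')) := by rw [ha]; exact ihd
      obtain ⟨G, H, hkey, hG, hH⟩ := decomp F hF
      set I' := Ideal.ofList as' with hI'
      set I := Ideal.ofList (b :: as') with hI
      have hIsup : I = Ideal.span {b} ⊔ I' := by rw [hI, Ideal.ofList_cons]
      have hbI : b ∈ I := by
        rw [hIsup]; exact Submodule.mem_sup_left (Ideal.subset_span rfl)
      have hI'I : I' ≤ I := by rw [hIsup]; exact le_sup_right
      have hget' : ∀ i, as'.get i ∈ I' := fun i => Ideal.subset_span (as'.get_mem _)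
      -- eval decomposition
      have hgets : a ∘ Fin.succ = as'.get := by
        rw [ha]
        funext i
        rfl
      have hget0 : a (0 : Fin (as'.length + 1)) = b := by rw [ha]; rfl
      have haF : aeval a F = aeval as'.get G + b * aeval a H := by
        rw [hkey, map_add, map_mul, aeval_rename, hgets, aeval_X, hget0]
      -- split F(a) along I'^(d+2) ⊔ b I^(d+1)
      have h1 : aeval a F ∈ I' ^ (d + 2) ⊔ Ideal.span {b} * I ^ (d + 1) := by
        have := lemPow b as' (d + 1) (by rw [← hIsup]; exact hFe)
        rwa [← hIsup] at this
      obtain ⟨u, hu, w, hw, hvw⟩ := Submodule.mem_sup.mp h1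
      obtain ⟨s, hs, hws⟩ := Ideal.mem_span_singleton_mul.mp hw
      -- c := s - aeval H
      set c : R := s - aeval a H with hc
      have hkey2 : b * c = aeval as'.get G - u := by
        have h := hvw
        rw [haF, ← hws] at h
        rw [hc]
        linear_combination h
      have hbc : b * c ∈ I' ^ (d + 1) := by
        have hGI : aeval as'.get G ∈ I' ^ (d + 1) := aeval_mem I' hget' hG
        rw [hkey2]
        exact sub_mem hGI (Ideal.pow_le_pow_right (Nat.le_succ _) hu)
      have hcI' : c ∈ I' ^ (d + 1) := lemB hb hqr' (d + 1) c hbc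
      rw [hI', ofList_eq_span] at hcI'
      obtain ⟨P, hP, hPe⟩ := exists_repr as'.get hcI'
      -- G - C b * P  is homog d+1 and evaluates into I'^(d+2)
      have hGbP : (G - C b * P).IsHomogeneous (d + 1) :=
        hG.sub (by simpa using (isHomogeneous_C _ b).mul hP)
      have hGbPe : aeval as'.get (G - C b * P) ∈ I' ^ (d + 2) := by
        have : aeval as'.get (G - C b * P) = aeval as'.get G - b * c := by
          rw [map_sub, map_mul, aeval_C, hPe]; simp
        rw [this]
        have hbceq : aeval as'.get G - b * c = u := by linear_combination - hkey2
        rw [hbceq]; exact hu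
      have hGmap : G ∈ Ideal.map (C : R →+* MvPolynomial (Fin as'.length) R) I := by
        have h2 := hqr' (d + 1) _ hGbP hGbPe
        have h3 : G - C b * P ∈ Ideal.map (C : R →+* MvPolynomial (Fin as'.length) R) I :=
          Ideal.map_mono hI'I h2
        have h4 : C b * P ∈ Ideal.map (C : R →+* MvPolynomial (Fin as'.length) R) I :=
          Ideal.mul_mem_right P _ (Ideal.mem_map_of_mem _ hbI)
        simpa using add_mem h3 h4
      -- coefficients of G in I, hence F₀ evaluates into I^(d+2)
      have hGcoeff : ∀ m, G.coeff m ∈ I := fun m => MvPolynomial.mem_map_C_iff.mp hGmap m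
      have hF0e : aeval as'.get G ∈ I ^ (d + 2) := by
        have := aeval_mem_mul I I (fun i => hI'I (hget' i)) hG hGcoeff
        rwa [← pow_succ'] at this
      -- b * H(a) ∈ I^(d+2)
      have hbH : b * aeval a H ∈ I ^ (d + 2) := by
        have : b * aeval a H = aeval a F - aeval as'.get G := by
          rw [haF]; ring
        rw [this]
        exact sub_mem hFe hF0e
      have hHa : aeval a H ∈ I ^ (d + 1) := lemB' hb hqr' (d + 1) _ hbH
      have hHmap := ihd H hH hHa
      -- assemble
      rw [hkey]
      apply add_mem _ (Ideal.mul_mem_left _ _ hHmap)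
      -- rename succ G ∈ map C I
      have : rename Fin.succ G ∈ Ideal.map (rename (Fin.succ : Fin as'.length → Fin (as'.length + 1))).toRingHom
          (Ideal.map (C : R →+* MvPolynomial (Fin as'.length) R) I) :=
        Ideal.mem_map_of_mem _ hGmap
      rw [Ideal.map_map] at this
      have hcomp : (rename (Fin.succ : Fin as'.length → Fin (as'.length + 1))).toRingHom.comp
          (C : R →+* MvPolynomial (Fin as'.length) R) = (C : R →+* MvPolynomial (Fin (as'.length + 1)) R) := by
        ext r
        simp
      rwa [hcomp] at this

lemma ofList_reverse (l : List R) : Ideal.ofList l.reverse = Ideal.ofList l := by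
  have : {r : R | r ∈ l.reverse} = {r : R | r ∈ l} := by
    ext r; simp
  show Ideal.span _ = Ideal.span _
  rw [this]

lemma smul_top_eq (I : Ideal R) : (I • ⊤ : Submodule R R) = I := by
  rw [Ideal.smul_eq_mul, Ideal.mul_top]

open RingTheory.Sequence in
lemma goodseq_reverse (as : List R) (h : IsWeaklyRegular R as) : GoodSeq as.reverse := by
  induction as using List.reverseRecOn with
  | nil => trivial
  | append_singleton l a ih =>
    obtain ⟨hl, ha⟩ := (isWeaklyRegular_append_iff R l [a]).mp h
    rw [List.reverse_append, List.reverse_singleton, List.singleton_append]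
    refine ⟨ih hl, fun z hz => ?_⟩
    rw [ofList_reverse] at hz ⊢
    have hreg : IsSMulRegular (R ⧸ (Ideal.ofList l • ⊤ : Submodule R R)) a :=
      (isWeaklyRegular_singleton_iff _ a).mp ha
    have hmk : a • (Submodule.Quotient.mk z : R ⧸ (Ideal.ofList l • ⊤ : Submodule R R)) = a • 0 := by
      rw [smul_zero, ← Submodule.Quotient.mk_smul, Submodule.Quotient.mk_eq_zero,
        smul_top_eq, smul_eq_mul]
      exact hz
    have := hreg hmk
    rw [Submodule.Quotient.mk_eq_zero, smul_top_eq] at this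
    exact this

lemma colon_pow {b : R} {as' : List R} (hgood : GoodSeq (b :: as')) :
    ∀ (j m : ℕ) (z : R), z * b ^ j ∈ (Ideal.ofList (b :: as')) ^ (m + j) →
      z ∈ (Ideal.ofList (b :: as')) ^ m := by
  obtain ⟨hgood', hb⟩ := hgood
  have hqr : QRProp as' := qr_core as' hgood'
  intro j
  induction j with
  | zero => intro m z hz; simpa using hz
  | succ j ihj =>
    intro m z hz
    apply ihj m z
    apply lemB' hb hqr (m + j)
    have : b * (z * b ^ j) = z * b ^ (j + 1) := by ring
    rw [this]
    exact hz

end RRaux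

theorem stmt3 {R : Type*} [CommRing R] [IsNoetherianRing R]
    (I : Ideal R) (hprime : I.IsPrime) (hne : I ≠ ⊥)
    (as : List R) (hreg : RingTheory.Sequence.IsRegular R as) (hI : I = Ideal.ofList as)
    (e : ℕ) (he : 0 < e) :
    I ^ e = ⨆ n : ℕ, (I ^ (e * (n + 1))).colon ((I ^ (e * n) : Ideal R) : Set R) := by
  subst hI
  have has : as ≠ [] := by
    rintro rfl
    rw [Ideal.ofList_nil] at hne
    exact hne rfl
  obtain ⟨b, tail, hrev⟩ : ∃ b tail, as.reverse = b :: tail := by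
    cases hrev : as.reverse with
    | nil => exact absurd (List.reverse_eq_nil_iff.mp hrev) has
    | cons b tail => exact ⟨b, tail, rfl⟩
  have hgood : RRaux.GoodSeq (b :: tail) := hrev ▸ RRaux.goodseq_reverse as hreg.toIsWeaklyRegular
  have hIrev : Ideal.ofList (b :: tail) = Ideal.ofList as := by
    rw [← hrev, RRaux.ofList_reverse]
  rw [← hIrev]
  set J := Ideal.ofList (b :: tail) with hJ
  apply le_antisymm
  · refine le_trans ?_ (le_iSup _ 0)
    intro x hx
    rw [Submodule.mem_colon]
    intro p hp
    have hx' : x * p ∈ J ^ e := Ideal.mul_mem_right p _ hx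
    have h1 : e * (0 + 1) = e := by ring
    rw [h1]
    exact hx'
  · refine iSup_le fun n => ?_
    intro x hx
    have hb_mem : b ∈ J := Ideal.subset_span (by simp)
    have hp : b ^ (e * n) ∈ J ^ (e * n) := Ideal.pow_mem_pow hb_mem _
    have hx2 := Submodule.mem_colon.mp hx _ hp
    rw [smul_eq_mul] at hx2
    have h2 : e * (n + 1) = e + e * n := by ring
    rw [h2] at hx2
    exact RRaux.colon_pow hgood (e * n) e x hx2
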